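/- Let S = R[x;δ] be a differential polynomial ring with J₀ = J(S) ∩ R. If R/J₀ is commutative and δ(R) ⊆ J₀, then S/J(S) is a commutative ring; in particular every left ideal of S containing J(S) is two-sided. -/

import Mathlib

open Finset

/-- `S` is a differential polynomial ring `R[x;δ]`: `δ` is a derivation on `R`,
`x * ι a = ι a * x + ι (δ a)`, and `S` is a free left `R`-module with basis `1, x, x², …`. -/
structure IsDiffPolyRing (R S : Type*) [Ring R] [Ring S]
    (ι : R →+* S) (x : S) (δ : R → R) : Prop where
  deriv_add : ∀ a b : R, δ (a + b) = δ a + δ b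
  deriv_mul : ∀ a b : R, δ (a * b) = a * δ b + δ a * b
  comm : ∀ a : R, x * ι a = ι a * x + ι (δ a)
  exists_repr : ∀ s : S, ∃ (n : ℕ) (c : ℕ → R),
    s = ∑ i ∈ Finset.range n, ι (c i) * x ^ i
  indep : ∀ (n : ℕ) (c : ℕ → R),
    (∑ i ∈ Finset.range n, ι (c i) * x ^ i) = 0 → ∀ i < n, c i = 0

/-- A left ideal is two-sided if it absorbs multiplication on the right. -/
def IdealIsTwoSided {S : Type*} [Ring S] (M : Ideal S) : Prop :=
  ∀ a ∈ M, ∀ s : S, a * s ∈ M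

/-- A ring is left quasi-duo if every maximal left ideal is two-sided. -/
def IsLeftQuasiDuo (S : Type*) [Ring S] : Prop :=
  ∀ M : Ideal S, M.IsMaximal → IdealIsTwoSided M

/-- A ring is right quasi-duo if every maximal right ideal is two-sided;
equivalently, its opposite ring is left quasi-duo. -/
def IsRightQuasiDuo (S : Type*) [Ring S] : Prop := IsLeftQuasiDuo Sᵐᵒᵖ

/-- If `R/J₀` is commutative and `δ(R) ⊆ J₀`, where `J₀ = J(S) ∩ R`, then `S/J(S)` is
commutative; in particular every left ideal of `S` containing `J(S)` is two-sided. -/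
theorem stmt9 {R S : Type*} [Ring R] [Ring S]
    (ι : R →+* S) (x : S) (δ : R → R) (h : IsDiffPolyRing R S ι x δ)
    (hcomm : ∀ a b : R, ι (a * b - b * a) ∈ (⊥ : Ideal S).jacobson)
    (hδ : ∀ r : R, ι (δ r) ∈ (⊥ : Ideal S).jacobson) :
    (∀ s t : S, s * t - t * s ∈ (⊥ : Ideal S).jacobson) ∧
      ∀ L : Ideal S, (⊥ : Ideal S).jacobson ≤ L → IdealIsTwoSided L := by
  set J := (⊥ : Ideal S).jacobson with hJdef
  have hJr : ∀ {a : S}, a ∈ J → ∀ s : S, a * s ∈ J := by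
    intro a ha s
    exact Ideal.mul_mem_right s _ ha
  have h1 : ∀ a b : R, ι a * ι b - ι b * ι a ∈ J := fun a b => by
    have := hcomm a b; rwa [map_sub, map_mul, map_mul] at this
  have hx : ∀ a : R, x * ι a - ι a * x = ι (δ a) := by
    intro a; rw [h.comm a]; noncomm_ring
  have h2 : ∀ (i : ℕ) (a : R), x ^ i * ι a - ι a * x ^ i ∈ J := by
    intro i a
    induction i with
    | zero => simpa using (Ideal.zero_mem J)
    | succ n ih =>
      have e : x ^ (n + 1) * ι a - ι a * x ^ (n + 1)
          = (x ^ n * ι a - ι a * x ^ n) * x + x ^ n * ι (δ a) := by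
        rw [pow_succ, mul_assoc, h.comm a]; noncomm_ring
      rw [e]
      exact Ideal.add_mem _ (hJr ih _) (Ideal.mul_mem_left _ _ (hδ a))
  have hmul : ∀ {a b c : S}, a * c - c * a ∈ J → b * c - c * b ∈ J →
      (a * b) * c - c * (a * b) ∈ J := by
    intro a b c hac hbc
    have e : (a * b) * c - c * (a * b) = a * (b * c - c * b) + (a * c - c * a) * b := by noncomm_ring
    rw [e]
    exact Ideal.add_mem _ (Ideal.mul_mem_left _ _ hbc) (hJr hac _)
  have hmul' : ∀ {u w z : S}, u * w - w * u ∈ J → u * z - z * u ∈ J →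
      u * (w * z) - (w * z) * u ∈ J := by
    intro u w z h1 h2
    have e : u * (w * z) - (w * z) * u = (u * w - w * u) * z + w * (u * z - z * u) := by noncomm_ring
    rw [e]
    exact Ideal.add_mem _ (hJr h1 _) (Ideal.mul_mem_left _ _ h2)
  have hterm : ∀ (a b : R) (i j : ℕ),
      (ι a * x ^ i) * (ι b * x ^ j) - (ι b * x ^ j) * (ι a * x ^ i) ∈ J := by
    intro a b i j
    apply hmul'
    · exact hmul (h1 a b) (h2 i b)
    · apply hmul
      · have := neg_mem (h2 j a)
        simpa [neg_sub] using this
      · have : x ^ i * x ^ j - x ^ j * x ^ i = 0 := by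
          rw [← pow_add, ← pow_add, Nat.add_comm]; exact sub_self _
        rw [this]; exact Ideal.zero_mem J
  have key : ∀ s t : S, s * t - t * s ∈ J := by
    intro s t
    obtain ⟨n, c, rfl⟩ := h.exists_repr s
    obtain ⟨m, d, rfl⟩ := h.exists_repr t
    have e : (∑ i ∈ Finset.range n, ι (c i) * x ^ i) * (∑ j ∈ Finset.range m, ι (d j) * x ^ j)
        - (∑ j ∈ Finset.range m, ι (d j) * x ^ j) * (∑ i ∈ Finset.range n, ι (c i) * x ^ i)
        = ∑ i ∈ Finset.range n, ∑ j ∈ Finset.range m,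
            ((ι (c i) * x ^ i) * (ι (d j) * x ^ j)
              - (ι (d j) * x ^ j) * (ι (c i) * x ^ i)) := by
      rw [Finset.sum_mul_sum, Finset.sum_mul_sum,
        Finset.sum_comm (s := Finset.range m) (t := Finset.range n), ← Finset.sum_sub_distrib]
      exact Finset.sum_congr rfl fun i _ => (Finset.sum_sub_distrib _ _).symm
    rw [e]
    exact Ideal.sum_mem _ fun i _ => Ideal.sum_mem _ fun j _ => hterm _ _ _ _
  refine ⟨key, ?_⟩
  intro L hL a haL s
  have e : a * s = s * a + (a * s - s * a) := by noncomm_ring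
  rw [e]
  exact L.add_mem (L.mul_mem_left s haL) (hL (key a s))
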